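/- Let G be a DAG with a prefix node set S, and let w ∈ S̄ be a source node of S̄ (no ancestors in S̄). Then for any u ∈ V and v ∈ S̄ with u d-separated from v given S, u remains d-separated from v given S ∪ {w}. -/
import Mathlib


/-- A relation (directed graph) is acyclic: no directed cycle. -/
def AcyclicRel {V : Type*} (E : V → V → Prop) : Prop :=
  ∀ v, ¬ Relation.TransGen E v v

/-- A prefix node set: closed under taking (strict) ancestors. -/
def PrefixSet {V : Type*} (E : V → V → Prop) (S : Set V) : Prop :=
  ∀ v ∈ S, ∀ u, Relation.TransGen E u v → u ∈ S

/-- Strict ancestors of `v`. -/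
def Anc {V : Type*} (E : V → V → Prop) (v : V) : Set V :=
  {u | Relation.TransGen E u v}

/-- Inclusive ancestors of `v` : `Anc[v] = Anc(v) ∪ {v}`. -/
def AncI {V : Type*} (E : V → V → Prop) (v : V) : Set V :=
  {u | Relation.ReflTransGen E u v}

/-- A path (list of vertices, consecutive ones adjacent in the skeleton) is
active given the conditioning set `C`: every interior non-collider is outside
`C` and every collider has an inclusive descendant in `C`. -/
def ActivePath {V : Type*} (E : V → V → Prop) (C : Set V) (p : List V) : Prop :=
  p.Chain' (fun a b => E a b ∨ E b a) ∧
  (∀ a w b, [a, w, b] <:+: p → ¬(E a w ∧ E b w) → w ∉ C) ∧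
  (∀ a w b, [a, w, b] <:+: p → E a w → E b w → ∃ d ∈ C, Relation.ReflTransGen E w d)

/-- `u` and `v` are d-connected given `C`. -/
def DConn {V : Type*} (E : V → V → Prop) (C : Set V) (u v : V) : Prop :=
  ∃ p : List V, p.head? = some u ∧ p.getLast? = some v ∧ ActivePath E C p

/-- `u` and `v` are d-separated given `C`. -/
def DSep {V : Type*} (E : V → V → Prop) (C : Set V) (u v : V) : Prop :=
  ¬ DConn E C u v

/-- Conditioning additionally on a source node of the complement of a prefix
node set cannot break a d-separation. -/
theorem stmt_9 {V : Type*} [Fintype V] (E : V → V → Prop) (hacyc : AcyclicRel E)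
    (S : Set V) (hS : PrefixSet E S) (w : V) (hw : w ∈ Sᶜ)
    (hsrc : Anc E w ∩ Sᶜ = ∅)
    (u v : V) (hv : v ∈ Sᶜ) (hsep : DSep E S u v) :
    DSep E (S ∪ {w}) u v := by
  intro hconn
  obtain ⟨p, hh, hl, hchain, hnc, hcol⟩ := hconn
  have hAncS : ∀ x, Relation.TransGen E x w → x ∈ S := by
    intro x hx
    by_contra hxS
    have : x ∈ Anc E w ∩ Sᶜ := ⟨hx, hxS⟩
    rw [hsrc] at this
    exact this
  apply hsep
  refine ⟨p, hh, hl, hchain, ?_, ?_⟩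
  · intro a x b hinf hncx
    have := hnc a x b hinf hncx
    intro hxS
    exact this (Or.inl hxS)
  · intro a c b hinf hac hbc
    obtain ⟨d, hd, hdesc⟩ := hcol a c b hinf hac hbc
    rcases hd with hd | hd
    · exact ⟨d, hd, hdesc⟩
    · have hdw : d = w := hd
      rw [hdw] at hdesc
      by_cases hcw : c = w
      · rw [hcw] at hac hbc hinf
        have haS : a ∈ S := hAncS a (Relation.TransGen.single hac)
        have hbS : b ∈ S := hAncS b (Relation.TransGen.single hbc)
        exfalso
        obtain ⟨s, t, hp⟩ := hinf
        rcases s.eq_nil_or_concat with rfl | ⟨s', x, rfl⟩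
        · rcases t with _ | ⟨y, t'⟩
          · -- p = [a, w, b], so u = a, v = b ∈ S, contradiction
            simp only [List.append_nil, List.nil_append] at hp
            subst hp
            simp only [List.head?] at hh
            have hb : b = v := by
              simpa using hl
            exact hv (hb ▸ hbS)
          · -- [w, b, y] is an infix, b is a non-collider
            have hinf2 : [w, b, y] <:+: p := by
              refine ⟨[a], t', ?_⟩
              simpa using hp
            have hnb : ¬(E w b ∧ E y b) := by
              rintro ⟨hwb, -⟩
              exact hacyc w (Relation.TransGen.head hwb (Relation.TransGen.single hbc))
            exact hnc w b y hinf2 hnb (Or.inl hbS)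
        · -- [x, a, w] is an infix, a is a non-collider
          have hinf2 : [x, a, w] <:+: p := by
            refine ⟨s', b :: t, ?_⟩
            simpa [List.concat_eq_append] using hp
          have hna : ¬(E x a ∧ E w a) := by
            rintro ⟨-, hwa⟩
            exact hacyc w (Relation.TransGen.head hwa (Relation.TransGen.single hac))
          exact hnc x a w hinf2 hna (Or.inl haS)
      · have hcS : c ∈ S := by
          apply hAncS
          rcases (Relation.reflTransGen_iff_eq_or_transGen.mp hdesc) with h | h
          · exact absurd h.symm hcw
          · exact h
        exact ⟨c, hcS, Relation.ReflTransGen.refl⟩
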